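/- Let 0 < α < 2 and let ν be a Borel measure on ℝ^d \ {0} with 0 < ∫ |x|^α dν(x) < ∞. Define ν̃(B) = ∫_0^∞ ν({x : t^{-1/α} x ∈ B}) dt. Then ν̃ has a polar decomposition ν̃(B) = ∫_S ∫_0^∞ 1_B(rξ) r^{−α−1} dr dλ(ξ), where λ(C) = α ∫_{ℝ^d} 1_C(x/|x|) |x|^α dν(x) is a finite measure on the unit sphere S. -/

import Mathlib

open MeasureTheory Filter Set
open scoped ENNReal

noncomputable section

/-- 1-D change of variables for lower Lebesgue integrals. -/
theorem my_lintegral_image {s : Set ℝ} {f f' : ℝ → ℝ} (hs : MeasurableSet s)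
    (hf' : ∀ x ∈ s, HasDerivWithinAt f (f' x) s x) (hf : Set.InjOn f s) (g : ℝ → ℝ≥0∞) :
    ∫⁻ x in f '' s, g x = ∫⁻ x in s, ENNReal.ofReal |f' x| * g (f x) := by
  simpa only [ContinuousLinearMap.det_toSpanSingleton] using
    MeasureTheory.lintegral_image_eq_lintegral_abs_det_fderiv_mul volume hs
      (fun x hx => (hf' x hx).hasFDerivWithinAt) hf g

/-- for `0 < α < 2` and a measure `ν` on `ℝ^d \ {0}` with
`0 < ∫|x|^α dν < ∞`, the measure `ν̃(B) = ∫_0^∞ ν({x : t^{-1/α} x ∈ B}) dt` has the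
polar decomposition `ν̃(B) = ∫_S ∫_0^∞ 1_B(rξ) r^{-α-1} dr dλ(ξ)`, where
`λ(C) = α ∫ 1_C(x/|x|) |x|^α dν(x)` is a finite measure on the unit sphere. -/
theorem stmt10 {d : ℕ} (α : ℝ) (hα0 : 0 < α) (hα2 : α < 2)
    (ν : Measure (EuclideanSpace ℝ (Fin d))) [SigmaFinite ν]
    (h0 : ν {0} = 0)
    (hpos : 0 < ∫⁻ x, ENNReal.ofReal (‖x‖ ^ α) ∂ν)
    (hfin : ∫⁻ x, ENNReal.ofReal (‖x‖ ^ α) ∂ν < ⊤)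
    (lam : Measure (EuclideanSpace ℝ (Fin d)))
    (hlam : lam = Measure.map (fun x => ‖x‖⁻¹ • x)
      (ν.withDensity fun x => ENNReal.ofReal (α * ‖x‖ ^ α))) :
    (∀ C : Set (EuclideanSpace ℝ (Fin d)), MeasurableSet C →
      lam C = ∫⁻ x, C.indicator (fun _ => ENNReal.ofReal (α * ‖x‖ ^ α)) (‖x‖⁻¹ • x) ∂ν) ∧
    lam Set.univ < ⊤ ∧
    ∀ B : Set (EuclideanSpace ℝ (Fin d)), MeasurableSet B →
      (0 : EuclideanSpace ℝ (Fin d)) ∉ B →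
      (∫⁻ t in Ioi (0:ℝ), ν {x | (t ^ (-(1/α))) • x ∈ B}) =
        ∫⁻ ξ, (∫⁻ r in Ioi (0:ℝ),
          B.indicator (fun _ => ENNReal.ofReal (r ^ (-α - 1))) (r • ξ)) ∂lam := by
  have hT : Measurable fun x : EuclideanSpace ℝ (Fin d) => ‖x‖⁻¹ • x :=
    measurable_norm.inv.smul measurable_id
  have hgm : Measurable fun x : EuclideanSpace ℝ (Fin d) =>
      ENNReal.ofReal (α * ‖x‖ ^ α) :=
    ((measurable_norm.pow_const α).const_mul α).ennreal_ofReal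
  have part1 : ∀ C : Set (EuclideanSpace ℝ (Fin d)), MeasurableSet C →
      lam C = ∫⁻ x, C.indicator (fun _ => ENNReal.ofReal (α * ‖x‖ ^ α)) (‖x‖⁻¹ • x) ∂ν := by
    intro C hC
    rw [hlam, Measure.map_apply hT hC, withDensity_apply _ (hT hC),
      ← lintegral_indicator (hT hC)]
    refine lintegral_congr fun x => ?_
    by_cases hx : ‖x‖⁻¹ • x ∈ C <;>
      simp [Set.indicator_apply, hx, Set.mem_preimage]
  have part2 : lam Set.univ < ⊤ := by
    rw [part1 univ MeasurableSet.univ]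
    simp only [Set.indicator_univ]
    have : ∀ x : EuclideanSpace ℝ (Fin d),
        ENNReal.ofReal (α * ‖x‖ ^ α) = ENNReal.ofReal α * ENNReal.ofReal (‖x‖ ^ α) :=
      fun x => ENNReal.ofReal_mul hα0.le
    simp_rw [this]
    rw [lintegral_const_mul' _ _ ENNReal.ofReal_ne_top]
    exact ENNReal.mul_lt_top ENNReal.ofReal_lt_top hfin
  refine ⟨part1, part2, fun B hB hB0 => ?_⟩
  -- measurability facts
  have hmeas : Measurable (Function.uncurry fun (t : ℝ) (x : EuclideanSpace ℝ (Fin d)) =>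
      Set.indicator B (1 : EuclideanSpace ℝ (Fin d) → ℝ≥0∞) ((t ^ (-(1/α))) • x)) := by
    have hm : Measurable fun q : ℝ × EuclideanSpace ℝ (Fin d) => (q.1 ^ (-(1/α))) • q.2 :=
      (measurable_fst.pow_const _).smul measurable_snd
    exact (measurable_one.indicator hB).comp hm
  have lhs1 : (∫⁻ t in Ioi (0:ℝ), ν {x | (t ^ (-(1/α))) • x ∈ B})
      = ∫⁻ t in Ioi (0:ℝ), ∫⁻ x, Set.indicator B (1 : EuclideanSpace ℝ (Fin d) → ℝ≥0∞) ((t ^ (-(1/α))) • x) ∂ν := by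
    refine lintegral_congr fun t => ?_
    have hBt : MeasurableSet {x : EuclideanSpace ℝ (Fin d) | (t ^ (-(1/α))) • x ∈ B} :=
      (measurable_const_smul _) hB
    rw [← lintegral_indicator_one hBt]
    refine lintegral_congr fun x => ?_
    rfl
  rw [lhs1, lintegral_lintegral_swap hmeas.aemeasurable]
  -- the right-hand side
  set F : EuclideanSpace ℝ (Fin d) → ℝ≥0∞ := fun ξ => ∫⁻ r in Ioi (0:ℝ),
    B.indicator (fun _ => ENNReal.ofReal (r ^ (-α - 1))) (r • ξ) with hFdef
  have hk : Measurable fun p : ℝ × EuclideanSpace ℝ (Fin d) =>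
      B.indicator (fun _ => ENNReal.ofReal (p.1 ^ (-α - 1))) (p.1 • p.2) := by
    have hm2 : Measurable fun p : ℝ × EuclideanSpace ℝ (Fin d) => p.1 • p.2 :=
      measurable_fst.smul measurable_snd
    have heq : (fun p : ℝ × EuclideanSpace ℝ (Fin d) =>
        B.indicator (fun _ => ENNReal.ofReal (p.1 ^ (-α - 1))) (p.1 • p.2))
        = Set.indicator ((fun p : ℝ × EuclideanSpace ℝ (Fin d) => p.1 • p.2) ⁻¹' B)
          (fun p => ENNReal.ofReal (p.1 ^ (-α - 1))) := by
      ext p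
      by_cases h : p.1 • p.2 ∈ B <;> simp [Set.indicator_apply, h, Set.mem_preimage]
    rw [heq]
    exact ((measurable_fst.pow_const _).ennreal_ofReal).indicator (hm2 hB)
  have hFm : Measurable F := hk.lintegral_prod_left'
  have hcomp : Measurable fun x : EuclideanSpace ℝ (Fin d) => F (‖x‖⁻¹ • x) := hFm.comp hT
  rw [hlam, lintegral_map hFm hT, lintegral_withDensity_eq_lintegral_mul _ hgm hcomp]
  -- pointwise identity for a.e. x (x ≠ 0)
  have hae : ∀ᵐ x ∂ν, x ≠ (0 : EuclideanSpace ℝ (Fin d)) := by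
    rw [ae_iff]
    convert h0 using 2
    ext x; simp
  refine lintegral_congr_ae (hae.mono fun x hx => ?_)
  simp only [Pi.mul_apply, Function.comp_apply]
  have hc : (0:ℝ) < ‖x‖ := norm_pos_iff.mpr hx
  have hαne : α ≠ 0 := hα0.ne'
  -- change of variables t = ‖x‖^α * r^(-α)
  have hderiv : ∀ r ∈ Ioi (0:ℝ), HasDerivWithinAt (fun r : ℝ => ‖x‖ ^ α * r ^ (-α))
      (‖x‖ ^ α * (-α * r ^ (-α - 1))) (Ioi 0) r := by
    intro r hr
    exact ((Real.hasDerivAt_rpow_const (Or.inl (ne_of_gt hr))).const_mul _).hasDerivWithinAt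
  have hinj : Set.InjOn (fun r : ℝ => ‖x‖ ^ α * r ^ (-α)) (Ioi 0) := by
    intro a ha b hb hab
    have h1 : a ^ (-α) = b ^ (-α) :=
      mul_left_cancel₀ (ne_of_gt (Real.rpow_pos_of_pos hc α)) hab
    exact Real.rpow_left_injOn (neg_ne_zero.mpr hαne) (le_of_lt ha : (0:ℝ) ≤ a) (le_of_lt hb : (0:ℝ) ≤ b) h1
  have himg : (fun r : ℝ => ‖x‖ ^ α * r ^ (-α)) '' Ioi 0 = Ioi 0 := by
    ext t
    constructor
    · rintro ⟨r, hr, rfl⟩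
      exact mul_pos (Real.rpow_pos_of_pos hc α) (Real.rpow_pos_of_pos hr _)
    · intro ht
      have hcα : (0:ℝ) < ‖x‖ ^ α := Real.rpow_pos_of_pos hc α
      have hq : (0:ℝ) < t / ‖x‖ ^ α := div_pos ht hcα
      refine ⟨(t / ‖x‖ ^ α) ^ (-α⁻¹), Real.rpow_pos_of_pos hq _, ?_⟩
      show ‖x‖ ^ α * ((t / ‖x‖ ^ α) ^ (-α⁻¹)) ^ (-α) = t
      have h1 : ((t / ‖x‖ ^ α) ^ (-α⁻¹)) ^ (-α) = t / ‖x‖ ^ α := by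
        rw [← Real.rpow_mul hq.le]
        have : (-α⁻¹) * (-α) = 1 := by field_simp
        rw [this, Real.rpow_one]
      rw [h1, mul_comm, div_mul_cancel₀ _ (ne_of_gt hcα)]
  have key := my_lintegral_image (f := fun r : ℝ => ‖x‖ ^ α * r ^ (-α))
    (f' := fun r : ℝ => ‖x‖ ^ α * (-α * r ^ (-α - 1))) measurableSet_Ioi hderiv hinj
    (fun t => Set.indicator B (1 : EuclideanSpace ℝ (Fin d) → ℝ≥0∞) ((t ^ (-(1/α))) • x))
  rw [himg] at key
  rw [key, hFdef]
  rw [← lintegral_const_mul' _ _ ENNReal.ofReal_ne_top]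
  refine setLIntegral_congr_fun measurableSet_Ioi (fun r hr => ?_)
  have hr : (0:ℝ) < r := hr
  -- the transformed point equals r • (‖x‖⁻¹ • x)
  have hpt : ((‖x‖ ^ α * r ^ (-α)) ^ (-(1/α))) • x = r • (‖x‖⁻¹ • x) := by
    have h1 : (‖x‖ ^ α * r ^ (-α)) ^ (-(1/α))
        = (‖x‖ ^ α) ^ (-(1/α)) * (r ^ (-α)) ^ (-(1/α)) :=
      Real.mul_rpow (Real.rpow_pos_of_pos hc α).le (Real.rpow_pos_of_pos hr _).le
    have h2 : (‖x‖ ^ α) ^ (-(1/α)) = ‖x‖⁻¹ := by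
      rw [← Real.rpow_mul hc.le]
      have : α * (-(1/α)) = -1 := by field_simp
      rw [this, Real.rpow_neg_one]
    have h3 : (r ^ (-α)) ^ (-(1/α)) = r := by
      rw [← Real.rpow_mul hr.le]
      have : (-α) * (-(1/α)) = 1 := by field_simp
      rw [this, Real.rpow_one]
    rw [h1, h2, h3, smul_smul, mul_comm]
  rw [hpt]
  -- the densities agree
  have habs : ENNReal.ofReal |‖x‖ ^ α * (-α * r ^ (-α - 1))|
      = ENNReal.ofReal (α * ‖x‖ ^ α) * ENNReal.ofReal (r ^ (-α - 1)) := by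
    rw [← ENNReal.ofReal_mul (by positivity)]
    congr 1
    rw [abs_mul, abs_mul, abs_neg, abs_of_pos (Real.rpow_pos_of_pos hc α),
      abs_of_pos hα0, abs_of_pos (Real.rpow_pos_of_pos hr _)]
    ring
  by_cases h : r • (‖x‖⁻¹ • x) ∈ B
  · simp only [Set.indicator_of_mem h, Pi.one_apply, mul_one]
    rw [habs]
  · simp [Set.indicator_of_notMem h]
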